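/- Let d ≥ 1. Define S(x; r, d) = (1/C(d,r)) Σ_{|R|=r} max{x_j : j ∈ R} on [0,1]^d for fixed r with 1 ≤ r ≤ d. Then in any decomposition S(·; r, d) = Σ_{k=1}^K f_k where each f_k : [0,1]^d → ℝ depends on at most r coordinates, one must have K ≥ C(d, r). -/

import Mathlib

open Finset

/-- `f` depends on at most `r` coordinates. -/
def DependsOnAtMost {d : ℕ} (r : ℕ) (f : (Fin d → ℝ) → ℝ) : Prop :=
  ∃ I : Finset (Fin d), I.card ≤ r ∧
    ∀ x y : Fin d → ℝ, (∀ i ∈ I, x i = y i) → f x = f y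

/-- Indicator point of a subset. -/
noncomputable def chiPt {d : ℕ} (T : Finset (Fin d)) : Fin d → ℝ :=
  fun i => if i ∈ T then 1 else 0

/-- Discrete alternating sum over subsets of `R`. -/
noncomputable def DeltaOp {d : ℕ} (R : Finset (Fin d)) (g : (Fin d → ℝ) → ℝ) : ℝ :=
  ∑ T ∈ R.powerset, (-1 : ℝ) ^ T.card * g (chiPt T)

lemma sum_neg_one_pow_real {d : ℕ} (A : Finset (Fin d)) :
    ∑ T ∈ A.powerset, (-1 : ℝ) ^ T.card = if A = ∅ then 1 else 0 := by
  have h := Finset.sum_powerset_neg_one_pow_card (x := A)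
  have := congrArg (fun z : ℤ => (z : ℝ)) h
  push_cast at this
  simpa using this

lemma DeltaOp_eq_zero {d : ℕ} {R I : Finset (Fin d)} {g : (Fin d → ℝ) → ℝ}
    (hg : ∀ x y : Fin d → ℝ, (∀ i ∈ I, x i = y i) → g x = g y)
    (hRI : ¬ R ⊆ I) : DeltaOp R g = 0 := by
  obtain ⟨i, hiR, hiI⟩ := Finset.not_subset.mp hRI
  have hR : R = insert i (R.erase i) := (Finset.insert_erase hiR).symm
  rw [DeltaOp, hR, Finset.sum_powerset_insert (Finset.notMem_erase i R),
    ← Finset.sum_add_distrib]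
  apply Finset.sum_eq_zero
  intro T hT
  have hiT : i ∉ T := fun h =>
    Finset.notMem_erase i R (Finset.mem_powerset.mp hT h)
  have hgeq : g (chiPt T) = g (chiPt (insert i T)) := by
    apply hg
    intro j hj
    have hji : j ≠ i := fun h => hiI (h ▸ hj)
    simp [chiPt, Finset.mem_insert, hji]
  rw [Finset.card_insert_of_notMem hiT, pow_succ, hgeq]
  ring

lemma sup'_chiPt {d : ℕ} (B T : Finset (Fin d)) (hB : B.Nonempty) :
    B.sup' hB (chiPt T) = if (B ∩ T).Nonempty then 1 else 0 := by
  split_ifs with h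
  · obtain ⟨j, hj⟩ := h
    apply le_antisymm
    · apply Finset.sup'_le
      intro i _
      simp only [chiPt]
      split_ifs <;> norm_num
    · have h1 := Finset.le_sup' (chiPt T) (Finset.mem_of_mem_inter_left hj)
      have h2 : chiPt T j = 1 := by simp [chiPt, Finset.mem_of_mem_inter_right hj]
      rw [h2] at h1
      exact h1
  · apply le_antisymm
    · apply Finset.sup'_le
      intro i hi
      have hiT : i ∉ T := fun hT => h ⟨i, Finset.mem_inter.mpr ⟨hi, hT⟩⟩
      simp [chiPt, hiT]
    · obtain ⟨j, hj⟩ := hB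
      have hjT : j ∉ T := fun hT => h ⟨j, Finset.mem_inter.mpr ⟨hj, hT⟩⟩
      have h1 := Finset.le_sup' (chiPt T) hj
      have h2 : chiPt T j = 0 := by simp [chiPt, hjT]
      rw [h2] at h1
      exact h1

lemma DeltaOp_sup' {d : ℕ} (R B : Finset (Fin d)) (hR : R.Nonempty) (hB : B.Nonempty) :
    DeltaOp R (fun x => B.sup' hB x) = -(if R ⊆ B then 1 else 0) := by
  unfold DeltaOp
  have hterm : ∀ T ∈ R.powerset, (-1 : ℝ) ^ T.card * B.sup' hB (chiPt T)
      = (-1 : ℝ) ^ T.card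
        - (if T ∈ (R \ B).powerset then (-1 : ℝ) ^ T.card else 0) := by
    intro T hT
    rw [sup'_chiPt B T hB]
    have hequiv : T ∈ (R \ B).powerset ↔ ¬ (B ∩ T).Nonempty := by
      rw [Finset.mem_powerset, Finset.not_nonempty_iff_eq_empty]
      constructor
      · intro hsub
        ext j
        simp only [Finset.mem_inter, Finset.notMem_empty, iff_false]
        rintro ⟨hjB, hjT⟩
        exact (Finset.mem_sdiff.mp (hsub hjT)).2 hjB
      · intro hint j hjT
        have hjR : j ∈ R := Finset.mem_powerset.mp hT hjT
        refine Finset.mem_sdiff.mpr ⟨hjR, fun hjB => ?_⟩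
        have : j ∈ B ∩ T := Finset.mem_inter.mpr ⟨hjB, hjT⟩
        simp [hint] at this
    by_cases hc : (B ∩ T).Nonempty
    · rw [if_pos hc, if_neg (fun h => (hequiv.mp h) hc), mul_one, sub_zero]
    · rw [if_neg hc, if_pos (hequiv.mpr hc), mul_zero, sub_self]
  rw [Finset.sum_congr rfl hterm, Finset.sum_sub_distrib, sum_neg_one_pow_real,
    Finset.sum_ite_mem]
  have hsub : R.powerset ∩ (R \ B).powerset = (R \ B).powerset :=
    Finset.inter_eq_right.mpr (Finset.powerset_mono.mpr (Finset.sdiff_subset))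
  rw [hsub, sum_neg_one_pow_real, if_neg (Finset.nonempty_iff_ne_empty.mp hR)]
  by_cases hRB : R ⊆ B
  · rw [if_pos hRB, if_pos (Finset.sdiff_eq_empty_iff_subset.mpr hRB)]; ring
  · rw [if_neg hRB, if_neg (fun h => hRB (Finset.sdiff_eq_empty_iff_subset.mp h))]; ring

theorem stmt14 (d r : ℕ) (hd : 1 ≤ d) (hr : 1 ≤ r) (hrd : r ≤ d)
    (S : (Fin d → ℝ) → ℝ)
    (hS : ∀ x, S x = (1 / (d.choose r) : ℝ) *
        ∑ R ∈ (Finset.powersetCard r (Finset.univ : Finset (Fin d))).attach,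
          R.1.sup' (Finset.card_pos.mp (by
            rw [(Finset.mem_powersetCard.mp R.2).2]; exact hr)) x)
    (K : ℕ) (f : Fin K → (Fin d → ℝ) → ℝ)
    (hdep : ∀ k, DependsOnAtMost r (f k))
    (hdecomp : ∀ x : Fin d → ℝ, (∀ i, x i ∈ Set.Icc (0 : ℝ) 1) →
      S x = ∑ k, f k x) :
    d.choose r ≤ K := by
  classical
  have hchoose_pos : 0 < d.choose r := Nat.choose_pos hrd
  have hC : ((d.choose r : ℝ)) ≠ 0 := by positivity
  have hcardP : ∀ R ∈ Finset.powersetCard r (Finset.univ : Finset (Fin d)),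
      R.card = r := fun R hR => (Finset.mem_powersetCard.mp hR).2
  have hkey : ∀ R ∈ Finset.powersetCard r (Finset.univ : Finset (Fin d)),
      ∃ k : Fin K, DeltaOp R (f k) ≠ 0 := by
    intro R hR
    have hRne : R.Nonempty := Finset.card_pos.mp (by rw [hcardP R hR]; exact hr)
    have hDS : DeltaOp R S = -(1 / (d.choose r) : ℝ) := by
      have h1 : DeltaOp R S =
          ∑ R' ∈ (Finset.powersetCard r (Finset.univ : Finset (Fin d))).attach,
            (1 / (d.choose r) : ℝ) * -(if R ⊆ R'.1 then (1:ℝ) else 0) := by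
        unfold DeltaOp
        calc ∑ T ∈ R.powerset, (-1:ℝ) ^ T.card * S (chiPt T)
            = ∑ T ∈ R.powerset,
                ∑ R' ∈ (Finset.powersetCard r (Finset.univ : Finset (Fin d))).attach,
                  (1 / (d.choose r) : ℝ) * ((-1:ℝ) ^ T.card *
                    R'.1.sup' (Finset.card_pos.mp (by
                      rw [(Finset.mem_powersetCard.mp R'.2).2]; exact hr)) (chiPt T)) := by
              refine Finset.sum_congr rfl fun T _ => ?_
              rw [hS (chiPt T), Finset.mul_sum, Finset.mul_sum]
              exact Finset.sum_congr rfl fun R' _ => mul_left_comm _ _ _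
          _ = ∑ R' ∈ (Finset.powersetCard r (Finset.univ : Finset (Fin d))).attach,
                (1 / (d.choose r) : ℝ) * DeltaOp R (fun x =>
                  R'.1.sup' (Finset.card_pos.mp (by
                    rw [(Finset.mem_powersetCard.mp R'.2).2]; exact hr)) x) := by
              rw [Finset.sum_comm]
              exact Finset.sum_congr rfl fun R' _ => by
                simp only [DeltaOp, Finset.mul_sum]
          _ = _ := Finset.sum_congr rfl fun R' _ => by
                rw [DeltaOp_sup' R R'.1 hRne]
      rw [h1, ← Finset.mul_sum,
        Finset.sum_attach (Finset.powersetCard r (Finset.univ : Finset (Fin d)))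
          (fun R' => -(if R ⊆ R' then (1:ℝ) else 0))]
      have hsingle : ∑ R' ∈ Finset.powersetCard r (Finset.univ : Finset (Fin d)),
          -(if R ⊆ R' then (1:ℝ) else 0) = -1 := by
        rw [Finset.sum_eq_single_of_mem R hR]
        · simp
        · intro b hb hbne
          have : ¬ R ⊆ b := fun hsub => hbne (Finset.eq_of_subset_of_card_le hsub
            (by rw [hcardP R hR, hcardP b hb])).symm
          simp [this]
      rw [hsingle]; ring
    have hDsum : DeltaOp R S = ∑ k, DeltaOp R (f k) := by
      unfold DeltaOp
      rw [Finset.sum_comm]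
      refine Finset.sum_congr rfl fun T _ => ?_
      rw [← Finset.mul_sum, ← hdecomp (chiPt T) (fun i => by
        simp only [chiPt]; split_ifs <;> simp)]
    by_contra hcon
    push_neg at hcon
    have hzero : DeltaOp R S = 0 := by
      rw [hDsum]; exact Finset.sum_eq_zero fun k _ => hcon k
    rw [hDS] at hzero
    have : (1 / (d.choose r) : ℝ) = 0 := by linarith
    simp [hC] at this
  have hPne : (Finset.powersetCard r (Finset.univ : Finset (Fin d))).Nonempty := by
    rw [← Finset.card_pos, Finset.card_powersetCard, Finset.card_univ, Fintype.card_fin]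
    exact hchoose_pos
  obtain ⟨R₀, hR₀⟩ := hPne
  obtain ⟨k₀, _⟩ := hkey R₀ hR₀
  haveI : Nonempty (Fin K) := ⟨k₀⟩
  let g : Finset (Fin d) → Fin K := fun R =>
    if h : ∃ k : Fin K, DeltaOp R (f k) ≠ 0 then h.choose else Classical.arbitrary _
  have hforce : ∀ R ∈ Finset.powersetCard r (Finset.univ : Finset (Fin d)),
      R = (hdep (g R)).choose := by
    intro R hR
    have h : ∃ k : Fin K, DeltaOp R (f k) ≠ 0 := hkey R hR
    have hgR : DeltaOp R (f (g R)) ≠ 0 := by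
      simp only [g, dif_pos h]
      exact h.choose_spec
    obtain ⟨hIcard, hIdep⟩ := (hdep (g R)).choose_spec
    have hsub : R ⊆ (hdep (g R)).choose := by
      by_contra hns
      exact hgR (DeltaOp_eq_zero hIdep hns)
    exact Finset.eq_of_subset_of_card_le hsub
      (le_trans hIcard (le_of_eq (hcardP R hR).symm))
  have hinj : Set.InjOn g (Finset.powersetCard r (Finset.univ : Finset (Fin d))) := by
    intro R1 h1 R2 h2 heq
    rw [hforce R1 h1, hforce R2 h2, heq]
  have hcard := Finset.card_le_card_of_injOn g (fun R _ => Finset.mem_univ (g R)) hinj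
  rwa [Finset.card_powersetCard, Finset.card_univ, Fintype.card_fin,
    Finset.card_univ, Fintype.card_fin] at hcard
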